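/- arXiv:1302.1340 — 6 statements merged into one kernel-verified Lean document; each statement's English description precedes it below -/
import Mathlib

section
/- If F' is a non-empty subset of F₀, then the collection {X(f,r) : f ∈ F', r > 0} is an F-family on X. -/
open Set

variable {X : Type*} [Nonempty X] [TopologicalSpace X] [DiscreteTopology X]

/-- The set `X(f,r) = {x ∈ X : |f(x)| ≤ r}`. -/
def XSet (f : BoundedContinuousFunction X ℂ) (r : ℝ) : Set X := {x | ‖f x‖ ≤ r}

/-- An `F`-family on `X`: a nonempty collection of nonempty subsets of `X` such that for every
member `A ≠ X` there are `B` in the collection and `f ∈ F` with `f(B) = {0}`,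
`f(X \ A) = {1}`. -/
def FFamily (F : StarSubalgebra ℂ (BoundedContinuousFunction X ℂ)) (𝒜 : Set (Set X)) : Prop :=
  𝒜.Nonempty ∧ (∀ A ∈ 𝒜, A.Nonempty) ∧
    ∀ A ∈ 𝒜, A ≠ Set.univ →
      ∃ B ∈ 𝒜, ∃ f ∈ F, (∀ x ∈ B, f x = 0) ∧ ∀ x ∉ A, f x = 1

/-- A filter on the set `X`, viewed as a collection of subsets. -/
def IsSetFilter (φ : Set (Set X)) : Prop :=
  φ.Nonempty ∧ (∀ A ∈ φ, ∀ B ∈ φ, A ∩ B ∈ φ) ∧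
    (∀ A ∈ φ, ∀ B : Set X, A ⊆ B → B ∈ φ) ∧ ∅ ∉ φ

/-- An `F`-filter on `X` is a filter which is also an `F`-family. -/
def FFilter (F : StarSubalgebra ℂ (BoundedContinuousFunction X ℂ)) (φ : Set (Set X)) : Prop :=
  IsSetFilter φ ∧ FFamily F φ

/-- An `F`-ultrafilter on `X` is an `F`-filter maximal with respect to inclusion. -/
def FUltrafilter (F : StarSubalgebra ℂ (BoundedContinuousFunction X ℂ)) (φ : Set (Set X)) : Prop :=
  FFilter F φ ∧ ∀ ψ : Set (Set X), FFilter F ψ → φ ⊆ ψ → ψ = φ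

/-- `F₀ = {f ∈ F : X(f,r) ≠ ∅ for all r > 0}`. -/
def FZero (F : StarSubalgebra ℂ (BoundedContinuousFunction X ℂ)) :
    Set (BoundedContinuousFunction X ℂ) :=
  {f | f ∈ F ∧ ∀ r : ℝ, 0 < r → (XSet f r).Nonempty}

/-- `Z(A) = {f ∈ F : f(x) = 0 for all x ∈ A}`. -/
def ZSet (F : StarSubalgebra ℂ (BoundedContinuousFunction X ℂ)) (A : Set X) :
    Set (BoundedContinuousFunction X ℂ) :=
  {f | f ∈ F ∧ ∀ x ∈ A, f x = 0}

/-- The finite intersection property. -/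
def FIP (𝒜 : Set (Set X)) : Prop :=
  ∀ s : Finset (Set X), ↑s ⊆ 𝒜 → s.Nonempty → (⋂₀ (s : Set (Set X))).Nonempty

/-- A filter base on `X`. -/
def IsFilterBase (ℬ : Set (Set X)) : Prop :=
  ℬ.Nonempty ∧ ∅ ∉ ℬ ∧ ∀ A ∈ ℬ, ∀ B ∈ ℬ, ∃ C ∈ ℬ, C ⊆ A ∩ B

/-- The filter generated by a filter base. -/
def genFilter (ℬ : Set (Set X)) : Set (Set X) :=
  {A | ∃ B ∈ ℬ, B ⊆ A}

/-- `δX`, the space of all `F`-ultrafilters on `X`. -/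
def Delta (F : StarSubalgebra ℂ (BoundedContinuousFunction X ℂ)) : Type _ :=
  {p : Set (Set X) // FUltrafilter F p}

/-- `Â = {p ∈ δX : A ∈ p}`. -/
def hatSet (F : StarSubalgebra ℂ (BoundedContinuousFunction X ℂ)) (A : Set X) :
    Set (Delta F) :=
  {p | A ∈ p.1}

/-- The topology on `δX` having `{Â : A ⊆ X}` as a base. -/
instance (F : StarSubalgebra ℂ (BoundedContinuousFunction X ℂ)) :
    TopologicalSpace (Delta F) :=
  TopologicalSpace.generateFrom {S | ∃ A : Set X, S = hatSet F A}

/-- For an `F`-filter `φ`, `φ̂ = {p ∈ δX : φ ⊆ p}`. -/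
def hatF (F : StarSubalgebra ℂ (BoundedContinuousFunction X ℂ)) (φ : Set (Set X)) :
    Set (Delta F) :=
  {p | φ ⊆ p.1}

/-- `τ(F)`, the weakest topology on `X` making every member of `F` continuous. -/
noncomputable def tauF (F : StarSubalgebra ℂ (BoundedContinuousFunction X ℂ)) : TopologicalSpace X :=
  ⨅ f ∈ (F : Set (BoundedContinuousFunction X ℂ)),
    TopologicalSpace.induced (fun x => f x) inferInstance

/-- `B(I) = {X(f,r) : f ∈ I, r > 0}` for an ideal `I` of `F`. -/
def BIdeal (F : StarSubalgebra ℂ (BoundedContinuousFunction X ℂ)) (I : Ideal F) :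
    Set (Set X) :=
  {S | ∃ f ∈ I, ∃ r : ℝ, 0 < r ∧ S = XSet (f : BoundedContinuousFunction X ℂ) r}

/-- Evaluation at a point as an algebra hom. -/
noncomputable def evalHomBCF (x : X) : BoundedContinuousFunction X ℂ →ₐ[ℂ] ℂ where
  toFun g := g x
  map_one' := rfl
  map_mul' _ _ := rfl
  map_zero' := rfl
  map_add' _ _ := rfl
  commutes' _ := rfl

lemma star_mul_self_apply (f : BoundedContinuousFunction X ℂ) (x : X) :
    (star f * f) x = ((‖f x‖ ^ 2 : ℝ) : ℂ) := by
  have : (star f * f) x = star (f x) * f x := rfl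
  rw [this, Complex.star_def, mul_comm, Complex.mul_conj]
  norm_cast
  rw [Complex.normSq_eq_norm_sq]

/-- Functional calculus membership in a closed star subalgebra. -/
lemma cfc_mem_F (F : StarSubalgebra ℂ (BoundedContinuousFunction X ℂ))
    (hF : IsClosed (F : Set (BoundedContinuousFunction X ℂ)))
    (f : BoundedContinuousFunction X ℂ) (hf : f ∈ F)
    (ψ : ℝ → ℝ) (hψ : Continuous ψ) (hb : ∀ t, |ψ t| ≤ 1)
    (g : BoundedContinuousFunction X ℂ) (hg : ∀ x, g x = ((ψ (‖f x‖ ^ 2) : ℝ) : ℂ)) :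
    g ∈ F := by
  have hclosed : (F : Set (BoundedContinuousFunction X ℂ)) = closure F := (hF.closure_eq).symm
  have : g ∈ closure (F : Set (BoundedContinuousFunction X ℂ)) := by
    rw [Metric.mem_closure_iff]
    intro ε hε
    obtain ⟨p, hp⟩ := exists_polynomial_near_of_continuousOn 0 (‖f‖ ^ 2) ψ
      hψ.continuousOn (ε / 2) (by linarith)
    set a : BoundedContinuousFunction X ℂ := star f * f with ha
    have haF : a ∈ F := mul_mem (star_mem hf) hf
    set q : BoundedContinuousFunction X ℂ :=
      Polynomial.aeval a (p.map (algebraMap ℝ ℂ)) with hq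
    have hqF : q ∈ F := by
      have h1 : Polynomial.aeval a (p.map (algebraMap ℝ ℂ)) ∈ Algebra.adjoin ℂ {a} :=
        Polynomial.aeval_mem_adjoin_singleton ℂ a
      have h2 : Algebra.adjoin ℂ ({a} : Set (BoundedContinuousFunction X ℂ)) ≤ F.toSubalgebra :=
        Algebra.adjoin_le (by simpa using haF)
      exact h2 h1
    refine ⟨q, hqF, ?_⟩
    have hle : dist g q ≤ ε / 2 := by
      rw [BoundedContinuousFunction.dist_le (by linarith)]
      intro x
      have hqx : q x = ((p.eval (‖f x‖ ^ 2) : ℝ) : ℂ) := by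
        have h1 : q x = evalHomBCF x (Polynomial.aeval a (p.map (algebraMap ℝ ℂ))) := rfl
        rw [h1, ← Polynomial.aeval_algHom_apply]
        have h2 : evalHomBCF x a = ((‖f x‖ ^ 2 : ℝ) : ℂ) := star_mul_self_apply f x
        rw [h2]
        have : ((‖f x‖ ^ 2 : ℝ) : ℂ) = algebraMap ℝ ℂ (‖f x‖ ^ 2) := rfl
        rw [this, Polynomial.aeval_map_algebraMap, Polynomial.aeval_algebraMap_apply,
          Polynomial.coe_aeval_eq_eval]
        rfl
      have ht : ‖f x‖ ^ 2 ∈ Set.Icc (0 : ℝ) (‖f‖ ^ 2) := by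
        constructor
        · positivity
        · have := BoundedContinuousFunction.norm_coe_le_norm f x
          have h0 : (0:ℝ) ≤ ‖f x‖ := norm_nonneg _
          nlinarith
      rw [dist_eq_norm, hg x, hqx]
      have : ‖(((ψ (‖f x‖ ^ 2) : ℝ) : ℂ)) - ((p.eval (‖f x‖ ^ 2) : ℝ) : ℂ)‖
          = |ψ (‖f x‖ ^ 2) - p.eval (‖f x‖ ^ 2)| := by
        norm_cast
      rw [this]
      rw [abs_sub_comm]
      linarith [hp _ ht]
    linarith [hle]
  rwa [← SetLike.mem_coe, hclosed]

theorem stmt0 (F : StarSubalgebra ℂ (BoundedContinuousFunction X ℂ)) (hF : IsClosed (F : Set (BoundedContinuousFunction X ℂ)))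
    (F' : Set (BoundedContinuousFunction X ℂ)) (hne : F'.Nonempty) (hsub : F' ⊆ FZero F) :
    FFamily F {S | ∃ f ∈ F', ∃ r : ℝ, 0 < r ∧ S = XSet f r} := by
  refine ⟨?_, ?_, ?_⟩
  · obtain ⟨f₀, hf₀⟩ := hne
    exact ⟨XSet f₀ 1, f₀, hf₀, 1, one_pos, rfl⟩
  · rintro A ⟨f, hf, r, hr, rfl⟩
    exact (hsub hf).2 r hr
  · rintro A ⟨f, hf, r, hr, rfl⟩ -
    set c : ℝ := (r / 2) ^ 2 with hc
    set d : ℝ := r ^ 2 with hd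
    have hcd : c < d := by
      rw [hc, hd]; nlinarith
    set ψ : ℝ → ℝ := fun t => min 1 (max 0 ((t - c) / (d - c))) with hψdef
    have hψ : Continuous ψ := by
      apply Continuous.min continuous_const
      apply Continuous.max continuous_const
      exact (continuous_id.sub continuous_const).div_const _
    have hψ0 : ∀ t ≤ c, ψ t = 0 := by
      intro t ht
      have h1 : (t - c) / (d - c) ≤ 0 :=
        div_nonpos_of_nonpos_of_nonneg (by linarith) (by linarith)
      simp only [hψdef]
      rw [max_eq_left h1, min_eq_right zero_le_one]
    have hψ1 : ∀ t, d ≤ t → ψ t = 1 := by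
      intro t ht
      have h1 : (1 : ℝ) ≤ (t - c) / (d - c) :=
        (one_le_div (by linarith)).mpr (by linarith)
      simp only [hψdef]
      rw [max_eq_right (by linarith), min_eq_left h1]
    have hψnonneg : ∀ t, 0 ≤ ψ t := fun t =>
      le_min zero_le_one (le_max_left _ _)
    have hψle : ∀ t, ψ t ≤ 1 := fun t => min_le_left _ _
    have habs : ∀ t, |ψ t| ≤ 1 := fun t => abs_le.mpr ⟨by linarith [hψnonneg t], hψle t⟩
    set g : BoundedContinuousFunction X ℂ :=
      BoundedContinuousFunction.ofNormedAddCommGroup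
        (fun x => ((ψ (‖f x‖ ^ 2) : ℝ) : ℂ)) continuous_of_discreteTopology 1
        (fun x => by
          rw [Complex.norm_real]
          exact habs _) with hgdef
    have hgapp : ∀ x, g x = ((ψ (‖f x‖ ^ 2) : ℝ) : ℂ) := fun x => rfl
    have hgF : g ∈ F := cfc_mem_F F hF f (hsub hf).1 ψ hψ habs g hgapp
    refine ⟨XSet f (r / 2), ⟨f, hf, r / 2, by linarith, rfl⟩, g, hgF, ?_, ?_⟩
    · intro x hx
      have hx' : ‖f x‖ ≤ r / 2 := hx
      have ht : ‖f x‖ ^ 2 ≤ c := by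
        rw [hc]
        exact pow_le_pow_left₀ (norm_nonneg _) hx' 2
      rw [hgapp x, hψ0 _ ht]
      norm_num
    · intro x hx
      have hx' : r < ‖f x‖ := lt_of_not_ge hx
      have ht : d ≤ ‖f x‖ ^ 2 := by
        rw [hd]
        exact pow_le_pow_left₀ (by linarith) hx'.le 2
      rw [hgapp x, hψ1 _ ht]
      norm_num
end

section
/- If 𝒜 is an F-family on X which has the finite intersection property (every finite subfamily of 𝒜 has non-empty intersection), then there exists an F-ultrafilter p on X such that 𝒜 ⊆ p. -/
open Set

variable {X : Type*} [Nonempty X] [TopologicalSpace X] [DiscreteTopology X]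

theorem stmt1 (F : StarSubalgebra ℂ (BoundedContinuousFunction X ℂ)) (hF : IsClosed (F : Set (BoundedContinuousFunction X ℂ)))
    (𝒜 : Set (Set X)) (h𝒜 : FFamily F 𝒜) (hfip : FIP 𝒜) :
    ∃ p : Set (Set X), FUltrafilter F p ∧ 𝒜 ⊆ p := by
  classical
  obtain ⟨hAne, hAnemem, hkey⟩ := h𝒜
  set φ : Set (Set X) := {A | ∃ s : Finset (Set X), ↑s ⊆ 𝒜 ∧ ⋂₀ ↑s ⊆ A} with hφdef
  have h𝒜φ : 𝒜 ⊆ φ := by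
    intro A hA
    exact ⟨{A}, by simpa using hA, by simp⟩
  have hφmem : ∀ A ∈ φ, A.Nonempty := by
    rintro A ⟨s, hs, hsub⟩
    rcases s.eq_empty_or_nonempty with rfl | hsne
    · exact Set.Nonempty.mono (by simpa using hsub) Set.univ_nonempty
    · exact (hfip s hs hsne).mono hsub
  have hφinter : ∀ A ∈ φ, ∀ B ∈ φ, A ∩ B ∈ φ := by
    rintro A ⟨s, hs, hsub⟩ B ⟨t, ht, htsub⟩
    refine ⟨s ∪ t, ?_, ?_⟩
    · rw [Finset.coe_union]; exact Set.union_subset hs ht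
    · intro x hx
      rw [Finset.coe_union, Set.sInter_union] at hx
      exact ⟨hsub hx.1, htsub hx.2⟩
  have key : ∀ s : Finset (Set X), ↑s ⊆ 𝒜 → (∀ t ∈ s, t ≠ Set.univ) →
      ∃ B ∈ φ, ∃ f ∈ F, (∀ x ∈ B, f x = 0) ∧ ∀ x ∉ ⋂₀ (s : Set (Set X)), f x = 1 := by
    intro s
    induction s using Finset.induction_on with
    | empty =>
      intro _ _
      exact ⟨Set.univ, ⟨∅, by simp, by simp⟩, 0, zero_mem F, by simp, by simp⟩
    | @insert t s₀ hts₀ ih =>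
      intro hsub hne
      obtain ⟨B₀, hB₀, f₀, hf₀F, hf₀0, hf₀1⟩ :=
        ih (fun u hu => hsub (by simp [hu])) (fun u hu => hne u (by simp [hu]))
      obtain ⟨Bt, hBt𝒜, ft, hftF, hft0, hft1⟩ := hkey t (hsub (by simp)) (hne t (by simp))
      refine ⟨B₀ ∩ Bt, hφinter _ hB₀ _ (h𝒜φ hBt𝒜), f₀ + ft - f₀ * ft,
        sub_mem (add_mem hf₀F hftF) (mul_mem hf₀F hftF), ?_, ?_⟩
      · intro x hx
        simp [hf₀0 x hx.1, hft0 x hx.2]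
      · intro x hx
        rw [Finset.coe_insert, Set.sInter_insert] at hx
        simp only [Set.mem_inter_iff, not_and_or] at hx
        rcases hx with hx | hx
        · have := hft1 x hx
          simp [this]
        · have := hf₀1 x hx
          simp [this]
  have hφF : FFilter F φ := by
    refine ⟨⟨⟨Set.univ, ⟨∅, by simp, by simp⟩⟩, hφinter, ?_, ?_⟩, ⟨⟨Set.univ, ⟨∅, by simp, by simp⟩⟩, hφmem, ?_⟩⟩
    · rintro A ⟨s, hs, hsub⟩ B hAB
      exact ⟨s, hs, hsub.trans hAB⟩
    · intro h
      exact Set.not_nonempty_empty (hφmem ∅ h)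
    · rintro A ⟨s, hs, hsub⟩ _
      set s' : Finset (Set X) := s.filter (· ≠ Set.univ) with hs'
      have hsub' : ⋂₀ (s' : Set (Set X)) ⊆ A := by
        refine Set.Subset.trans ?_ hsub
        intro x hx t ht
        by_cases htu : t = Set.univ
        · simp [htu]
        · exact hx t (by simpa [hs', Finset.mem_filter, htu] using Finset.mem_coe.mp ht)
      obtain ⟨B, hBφ, f, hfF, hf0, hf1⟩ := key s'
        (fun u hu => hs (Finset.mem_of_mem_filter u hu))
        (fun u hu => (Finset.mem_filter.mp hu).2)
      exact ⟨B, hBφ, f, hfF, hf0, fun x hx => hf1 x (fun h => hx (hsub' h))⟩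
  -- Zorn's lemma
  have hch : ∀ c ⊆ {ψ : Set (Set X) | FFilter F ψ}, IsChain (· ⊆ ·) c → c.Nonempty →
      ∃ ub ∈ {ψ : Set (Set X) | FFilter F ψ}, ∀ s ∈ c, s ⊆ ub := by
    rintro c hcS hchain ⟨ψ₀, hψ₀⟩
    have hψ₀F : FFilter F ψ₀ := hcS hψ₀
    refine ⟨⋃₀ c, ⟨⟨?_, ?_, ?_, ?_⟩, ?_, ?_, ?_⟩, fun s hs => Set.subset_sUnion_of_mem hs⟩
    · obtain ⟨A, hA⟩ := hψ₀F.1.1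
      exact ⟨A, ψ₀, hψ₀, hA⟩
    · rintro A ⟨ψ₁, hψ₁, hA⟩ B ⟨ψ₂, hψ₂, hB⟩
      rcases hchain.total hψ₁ hψ₂ with h | h
      · exact ⟨ψ₂, hψ₂, (hcS hψ₂).1.2.1 A (h hA) B hB⟩
      · exact ⟨ψ₁, hψ₁, (hcS hψ₁).1.2.1 A hA B (h hB)⟩
    · rintro A ⟨ψ₁, hψ₁, hA⟩ B hAB
      exact ⟨ψ₁, hψ₁, (hcS hψ₁).1.2.2.1 A hA B hAB⟩
    · rintro ⟨ψ₁, hψ₁, h⟩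
      exact (hcS hψ₁).1.2.2.2 h
    · obtain ⟨A, hA⟩ := hψ₀F.2.1
      exact ⟨A, ψ₀, hψ₀, hA⟩
    · rintro A ⟨ψ₁, hψ₁, hA⟩
      exact (hcS hψ₁).2.2.1 A hA
    · rintro A ⟨ψ₁, hψ₁, hA⟩ hAu
      obtain ⟨B, hB, f, hfF, h0, h1⟩ := (hcS hψ₁).2.2.2 A hA hAu
      exact ⟨B, ⟨ψ₁, hψ₁, hB⟩, f, hfF, h0, h1⟩
  obtain ⟨p, hφp, hpmax⟩ := zorn_subset_nonempty {ψ : Set (Set X) | FFilter F ψ} hch φ hφF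
  exact ⟨p, ⟨hpmax.prop, fun ψ hψ hpψ => (hpmax.eq_of_le hψ hpψ).symm⟩, h𝒜φ.trans hφp⟩
end

section
/- Let φ be an F-filter on X and let f ∈ F. If X(f,r) ∩ B ≠ ∅ for every r > 0 and every B ∈ φ, then there exists an F-ultrafilter p on X such that φ ∪ {X(f,r) : r > 0} ⊆ p. -/
open Set

variable {X : Type*} [Nonempty X] [TopologicalSpace X] [DiscreteTopology X]

/-- Evaluation at a point as an algebra hom on bounded continuous functions. -/
noncomputable def bcfEval (x : X) : BoundedContinuousFunction X ℂ →ₐ[ℂ] ℂ where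
  toFun g := g x
  map_one' := rfl
  map_mul' _ _ := rfl
  map_zero' := rfl
  map_add' _ _ := rfl
  commutes' _ := rfl

lemma cut_lemma (F : StarSubalgebra ℂ (BoundedContinuousFunction X ℂ))
    (hF : IsClosed (F : Set (BoundedContinuousFunction X ℂ)))
    (f : BoundedContinuousFunction X ℂ) (hf : f ∈ F) (r : ℝ) (hr : 0 < r) :
    ∃ u ∈ F, (∀ x, ‖f x‖ ≤ r / 2 → u x = 0) ∧ (∀ x, r < ‖f x‖ → u x = 1) := by
  set a : ℝ := (r / 2) ^ 2 with ha_def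
  set b : ℝ := r ^ 2 with hb_def
  have ha : 0 < a := by positivity
  have hab : a < b := by
    apply pow_lt_pow_left₀ _ (by positivity)
    · norm_num
    · linarith
  -- the piecewise-linear cut function
  set θ : ℝ → ℝ := fun t => max 0 (min 1 ((t - a) / (b - a))) with hθ_def
  have hθcont : Continuous θ := by
    apply Continuous.max continuous_const
    apply Continuous.min continuous_const
    exact (continuous_id.sub continuous_const).div_const _
  have hθ0 : ∀ t, t ≤ a → θ t = 0 := by
    intro t ht
    have : (t - a) / (b - a) ≤ 0 := div_nonpos_of_nonpos_of_nonneg (by linarith) (by linarith)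
    simp only [hθ_def]
    rw [max_eq_left]
    exact le_trans (min_le_right _ _) this
  have hθ1 : ∀ t, b ≤ t → θ t = 1 := by
    intro t ht
    have hba : 0 < b - a := by linarith
    have : (1 : ℝ) ≤ (t - a) / (b - a) := (le_div_iff₀ hba).2 (by linarith)
    simp only [hθ_def]
    rw [min_eq_left this, max_eq_right zero_le_one]
  have hθmem : ∀ t, θ t ∈ Icc (0:ℝ) 1 :=
    fun t => ⟨le_max_left _ _, max_le (by norm_num) (min_le_left _ _)⟩
  -- h' = star f * f with h' x = ‖f x‖²
  set h' : BoundedContinuousFunction X ℂ := star f * f with hh'_def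
  have hh'F : h' ∈ F := mul_mem (star_mem hf) hf
  have hh'x : ∀ x, h' x = ((‖f x‖ ^ 2 : ℝ) : ℂ) := by
    intro x
    have : h' x = (starRingEnd ℂ) (f x) * f x := rfl
    rw [this, Complex.conj_mul', Complex.ofReal_pow]
  -- the candidate function u
  set u : BoundedContinuousFunction X ℂ :=
    ⟨⟨fun x => ((θ (‖f x‖ ^ 2) : ℝ) : ℂ), continuous_of_discreteTopology⟩, 2, by
      intro x y
      have h1 := hθmem (‖f x‖ ^ 2)
      have h2 := hθmem (‖f y‖ ^ 2)
      rw [show ({ toFun := fun x => ((θ (‖f x‖ ^ 2) : ℝ) : ℂ), continuous_toFun := continuous_of_discreteTopology } : C(X,ℂ)).toFun = fun x => ((θ (‖f x‖ ^ 2) : ℝ) : ℂ) from rfl, dist_eq_norm]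
      calc ‖((θ (‖f x‖ ^ 2) : ℝ) : ℂ) - ((θ (‖f y‖ ^ 2) : ℝ) : ℂ)‖
          ≤ ‖((θ (‖f x‖ ^ 2) : ℝ) : ℂ)‖ + ‖((θ (‖f y‖ ^ 2) : ℝ) : ℂ)‖ := norm_sub_le _ _
        _ ≤ 1 + 1 := by
            apply add_le_add <;> rw [Complex.norm_real, Real.norm_eq_abs, abs_le] <;>
              constructor <;> linarith [h1.1, h1.2, h2.1, h2.2]
        _ = 2 := by norm_num⟩ with hu_def
  have hux : ∀ x, u x = ((θ (‖f x‖ ^ 2) : ℝ) : ℂ) := fun x => rfl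
  have huF : u ∈ F := by
    have : u ∈ closure (F : Set (BoundedContinuousFunction X ℂ)) := by
      rw [Metric.mem_closure_iff]
      intro ε hε
      set M : ℝ := ‖f‖ ^ 2 with hM_def
      have hM0 : (0:ℝ) ≤ M := by positivity
      obtain ⟨p, hp⟩ := exists_polynomial_near_of_continuousOn 0 M θ hθcont.continuousOn
        (ε / 2) (by linarith)
      set q : Polynomial ℂ := p.map (algebraMap ℝ ℂ) with hq_def
      set gF : F := Polynomial.aeval (⟨h', hh'F⟩ : F) q with hgF_def
      refine ⟨(gF : BoundedContinuousFunction X ℂ), gF.2, ?_⟩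
      have hgx : ∀ x : X, (gF : BoundedContinuousFunction X ℂ) x
          = ((p.eval (‖f x‖ ^ 2) : ℝ) : ℂ) := by
        intro x
        have e1 : (gF : BoundedContinuousFunction X ℂ) = Polynomial.aeval h' q :=
          (Polynomial.aeval_algHom_apply F.subtype.toAlgHom (⟨h', hh'F⟩ : F) q).symm
        have e2 : (Polynomial.aeval h' q) x = Polynomial.aeval (h' x) q :=
          (Polynomial.aeval_algHom_apply (bcfEval x) h' q).symm
        rw [e1, e2, hh'x x]
        rw [Polynomial.aeval_def, hq_def]
        rw [Polynomial.eval₂_map]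
        have : (algebraMap ℂ ℂ).comp (algebraMap ℝ ℂ) = algebraMap ℝ ℂ := by
          ext z; simp
        rw [this]
        exact (Polynomial.eval₂_at_apply (algebraMap ℝ ℂ) _).trans rfl
      rw [dist_comm, dist_eq_norm]
      have hle : ‖(gF : BoundedContinuousFunction X ℂ) - u‖ ≤ ε / 2 := by
        apply BoundedContinuousFunction.norm_le (by linarith) |>.2
        intro x
        rw [BoundedContinuousFunction.coe_sub, Pi.sub_apply, hgx x, hux x,
          ← Complex.ofReal_sub, Complex.norm_real, Real.norm_eq_abs]
        have hx : ‖f x‖ ^ 2 ∈ Icc (0:ℝ) M := by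
          constructor
          · positivity
          · exact pow_le_pow_left₀ (norm_nonneg _) (f.norm_coe_le_norm x) 2
        exact le_of_lt (hp _ hx)
      linarith
    rwa [hF.closure_eq] at this
  refine ⟨u, huF, ?_, ?_⟩
  · intro x hx
    rw [hux x, hθ0 _ (pow_le_pow_left₀ (norm_nonneg _) hx 2), Complex.ofReal_zero]
  · intro x hx
    rw [hux x, hθ1 _ (pow_le_pow_left₀ (le_of_lt hr) (le_of_lt hx) 2), Complex.ofReal_one]

/-- Every `F`-filter extends to an `F`-ultrafilter. -/
lemma exists_ultra (F : StarSubalgebra ℂ (BoundedContinuousFunction X ℂ))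
    (ψ : Set (Set X)) (hψ : FFilter F ψ) :
    ∃ p : Set (Set X), FUltrafilter F p ∧ ψ ⊆ p := by
  set S : Set (Set (Set X)) := {χ | FFilter F χ ∧ ψ ⊆ χ} with hS_def
  have hzorn : ∀ c ⊆ S, IsChain (· ⊆ ·) c → c.Nonempty →
      ∃ ub ∈ S, ∀ s ∈ c, s ⊆ ub := by
    rintro c hcS hchain ⟨χ₀, hχ₀⟩
    have hne : (⋃₀ c).Nonempty := by
      obtain ⟨A, hA⟩ := (hcS hχ₀).1.1.1
      exact ⟨A, χ₀, hχ₀, hA⟩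
    have hinter : ∀ A ∈ ⋃₀ c, ∀ B ∈ ⋃₀ c, A ∩ B ∈ ⋃₀ c := by
      rintro A ⟨χ₁, hχ₁, hA⟩ B ⟨χ₂, hχ₂, hB⟩
      rcases hchain.total hχ₁ hχ₂ with hsub | hsub
      · exact ⟨χ₂, hχ₂, (hcS hχ₂).1.1.2.1 A (hsub hA) B hB⟩
      · exact ⟨χ₁, hχ₁, (hcS hχ₁).1.1.2.1 A hA B (hsub hB)⟩
    have hup : ∀ A ∈ ⋃₀ c, ∀ B : Set X, A ⊆ B → B ∈ ⋃₀ c := by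
      rintro A ⟨χ₁, hχ₁, hA⟩ B hAB
      exact ⟨χ₁, hχ₁, (hcS hχ₁).1.1.2.2.1 A hA B hAB⟩
    have hemp : ∅ ∉ ⋃₀ c := by
      rintro ⟨χ₁, hχ₁, hA⟩
      exact (hcS hχ₁).1.1.2.2.2 hA
    have hallne : ∀ A ∈ ⋃₀ c, A.Nonempty := by
      rintro A ⟨χ₁, hχ₁, hA⟩
      exact (hcS hχ₁).1.2.2.1 A hA
    have hwit : ∀ A ∈ ⋃₀ c, A ≠ Set.univ →
        ∃ B ∈ ⋃₀ c, ∃ g ∈ F, (∀ x ∈ B, g x = 0) ∧ ∀ x ∉ A, g x = 1 := by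
      rintro A ⟨χ₁, hχ₁, hA⟩ hAne
      obtain ⟨B, hB, g, hg, hg0, hg1⟩ := (hcS hχ₁).1.2.2.2 A hA hAne
      exact ⟨B, ⟨χ₁, hχ₁, hB⟩, g, hg, hg0, hg1⟩
    refine ⟨⋃₀ c, ⟨⟨⟨hne, hinter, hup, hemp⟩, hne, hallne, hwit⟩, ?_⟩,
      fun s hs => subset_sUnion_of_mem hs⟩
    exact fun A hA => ⟨χ₀, hχ₀, (hcS hχ₀).2 hA⟩
  obtain ⟨m, hψm, hm⟩ := zorn_subset_nonempty S hzorn ψ ⟨hψ, subset_rfl⟩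
  refine ⟨m, ⟨hm.1.1, ?_⟩, hψm⟩
  intro χ hχ hmχ
  exact le_antisymm (hm.2 ⟨hχ, hψm.trans hmχ⟩ hmχ) hmχ
theorem stmt2 (F : StarSubalgebra ℂ (BoundedContinuousFunction X ℂ)) (hF : IsClosed (F : Set (BoundedContinuousFunction X ℂ)))
    (φ : Set (Set X)) (hφ : FFilter F φ) (f : BoundedContinuousFunction X ℂ) (hf : f ∈ F)
    (h : ∀ r : ℝ, 0 < r → ∀ B ∈ φ, (XSet f r ∩ B).Nonempty) :
    ∃ p : Set (Set X), FUltrafilter F p ∧ φ ⊆ p ∧ ∀ r : ℝ, 0 < r → XSet f r ∈ p := by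
  obtain ⟨⟨hφne, hφint, hφup, hφemp⟩, _, hφallne, hφwit⟩ := hφ
  have huniv : univ ∈ φ := by
    obtain ⟨A, hA⟩ := hφne
    exact hφup A hA univ (subset_univ A)
  -- the filter generated by φ ∪ {X(f,r) : r > 0}
  set ψ : Set (Set X) := {A | ∃ B ∈ φ, ∃ r : ℝ, 0 < r ∧ B ∩ XSet f r ⊆ A} with hψ_def
  have hφψ : φ ⊆ ψ := fun A hA => ⟨A, hA, 1, one_pos, inter_subset_left⟩
  have hXψ : ∀ r : ℝ, 0 < r → XSet f r ∈ ψ := fun r hr =>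
    ⟨univ, huniv, r, hr, inter_subset_right⟩
  have hψfilter : FFilter F ψ := by
    have hψne : ψ.Nonempty := ⟨univ, hφψ huniv⟩
    have hψallne : ∀ A ∈ ψ, A.Nonempty := by
      rintro A ⟨B, hB, r, hr, hsub⟩
      obtain ⟨x, hx1, hx2⟩ := h r hr B hB
      exact ⟨x, hsub ⟨hx2, hx1⟩⟩
    refine ⟨⟨hψne, ?_, ?_, ?_⟩, hψne, hψallne, ?_⟩
    · -- intersections
      rintro A₁ ⟨B₁, hB₁, r₁, hr₁, hs₁⟩ A₂ ⟨B₂, hB₂, r₂, hr₂, hs₂⟩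
      refine ⟨B₁ ∩ B₂, hφint B₁ hB₁ B₂ hB₂, min r₁ r₂, lt_min hr₁ hr₂, ?_⟩
      rintro x ⟨⟨hxB₁, hxB₂⟩, hxr⟩
      have hxr' : ‖f x‖ ≤ min r₁ r₂ := hxr
      exact ⟨hs₁ ⟨hxB₁, show ‖f x‖ ≤ r₁ from le_trans hxr' (min_le_left _ _)⟩,
        hs₂ ⟨hxB₂, show ‖f x‖ ≤ r₂ from le_trans hxr' (min_le_right _ _)⟩⟩
    · -- upward closed
      rintro A ⟨B, hB, r, hr, hsub⟩ C hAC
      exact ⟨B, hB, r, hr, hsub.trans hAC⟩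
    · -- empty not in ψ
      intro hemp
      obtain ⟨x, hx⟩ := hψallne ∅ hemp
      exact hx
    · -- the F-family condition
      rintro A ⟨B, hB, r, hr, hsub⟩ hAne
      obtain ⟨u, hu, hu0, hu1⟩ := cut_lemma F hF f hf r hr
      -- get the witness for B (or the zero function if B = univ)
      obtain ⟨B', hB', g, hg, hg0, hg1⟩ :
          ∃ B' ∈ φ, ∃ g ∈ F, (∀ x ∈ B', g x = 0) ∧ ∀ x ∉ B, g x = 1 := by
        by_cases hBu : B = univ
        · exact ⟨univ, huniv, 0, zero_mem F, fun x _ => rfl,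
            fun x hx => absurd (mem_univ x) (hBu ▸ hx)⟩
        · obtain ⟨B', hB', g, hg, hg0, hg1⟩ := hφwit B hB hBu
          exact ⟨B', hB', g, hg, hg0, hg1⟩
      refine ⟨B' ∩ XSet f (r / 2), ⟨B', hB', r / 2, by linarith, subset_rfl⟩,
        g + u - g * u, ?_, ?_, ?_⟩
      · exact sub_mem (add_mem hg hu) (mul_mem hg hu)
      · rintro x ⟨hxB', hxr⟩
        have e : (g + u - g * u) x = g x + u x - g x * u x := rfl
        rw [e, hg0 x hxB', hu0 x hxr]
        ring
      · intro x hxA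
        have hxBX : x ∉ B ∩ XSet f r := fun hx => hxA (hsub hx)
        have e : (g + u - g * u) x = g x + u x - g x * u x := rfl
        rw [e]
        by_cases hxB : x ∈ B
        · have hxr : r < ‖f x‖ := by
            by_contra hle
            exact hxBX ⟨hxB, not_lt.mp hle⟩
          rw [hu1 x hxr]; ring
        · rw [hg1 x hxB]; ring
  obtain ⟨p, hp, hψp⟩ := exists_ultra F ψ hψfilter
  exact ⟨p, hp, hφψ.trans hψp, fun r hr => hψp (hXψ r hr)⟩
end

section
/- Let φ be an F-filter on X and let A be a subset of X. If A ∩ B ≠ ∅ for every B ∈ φ, then there exists an F-ultrafilter p on X containing the family φ ∪ {X(f,r) : f ∈ Z(A), r > 0}. -/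
open Set

variable {X : Type*} [Nonempty X] [TopologicalSpace X] [DiscreteTopology X]

section Aux
set_option linter.unusedSectionVars false
open Polynomial

private noncomputable def evalHom (x : X) : BoundedContinuousFunction X ℂ →ₐ[ℂ] ℂ where
  toFun f := f x
  map_one' := rfl
  map_mul' _ _ := rfl
  map_zero' := rfl
  map_add' _ _ := rfl
  commutes' _ := rfl

private lemma aeval_mem_F (F : StarSubalgebra ℂ (BoundedContinuousFunction X ℂ))
    {u : BoundedContinuousFunction X ℂ} (hu : u ∈ F) (q : ℂ[X]) :
    Polynomial.aeval u q ∈ F := by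
  induction q using Polynomial.induction_on with
  | C a => simpa using F.algebraMap_mem a
  | add p q hp hq => simpa using add_mem hp hq
  | monomial n a hp =>
      have : (Polynomial.aeval u) (Polynomial.C a * Polynomial.X ^ (n + 1))
          = (Polynomial.aeval u) (Polynomial.C a * Polynomial.X ^ n) * u := by
        simp [pow_succ, mul_assoc]
      rw [this]
      exact mul_mem hp hu

private lemma exists_cutoff (F : StarSubalgebra ℂ (BoundedContinuousFunction X ℂ))
    (hF : IsClosed (F : Set (BoundedContinuousFunction X ℂ)))
    {g : BoundedContinuousFunction X ℂ} (hg : g ∈ F) {s r : ℝ}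
    (hs : 0 < s) (hsr : s < r) :
    ∃ h : BoundedContinuousFunction X ℂ, h ∈ F ∧ (∀ x, ‖g x‖ ≤ s → h x = 0) ∧
      (∀ x, r < ‖g x‖ → h x = 1) := by
  have hd : (0:ℝ) < r ^ 2 - s ^ 2 := by nlinarith
  set θ : ℝ → ℝ := fun t => max 0 (min 1 ((t - s ^ 2) / (r ^ 2 - s ^ 2))) with hθ
  have θcont : Continuous θ := by
    apply continuous_const.max (continuous_const.min _)
    exact (continuous_id.sub continuous_const).div_const _
  have θ01 : ∀ t, ‖θ t‖ ≤ 1 := by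
    intro t
    rw [Real.norm_eq_abs, abs_le]
    constructor
    · exact le_trans (by norm_num) (le_max_left _ _)
    · exact max_le zero_le_one (min_le_left _ _)
  have θ0 : ∀ t ≤ s ^ 2, θ t = 0 := by
    intro t ht
    have : (t - s ^ 2) / (r ^ 2 - s ^ 2) ≤ 0 :=
      div_nonpos_of_nonpos_of_nonneg (by linarith) (le_of_lt hd)
    simp only [hθ]
    rw [max_eq_left]
    exact le_trans (min_le_right _ _) this
  have θ1 : ∀ t, r ^ 2 ≤ t → θ t = 1 := by
    intro t ht
    have h1 : (1:ℝ) ≤ (t - s ^ 2) / (r ^ 2 - s ^ 2) := by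
      rw [le_div_iff₀ hd]; linarith
    simp only [hθ]
    rw [min_eq_left h1, max_eq_right zero_le_one]
  -- the function h
  set h : BoundedContinuousFunction X ℂ :=
    BoundedContinuousFunction.ofNormedAddCommGroup
      (fun x => ((θ (‖g x‖ ^ 2) : ℝ) : ℂ)) continuous_of_discreteTopology 1
      (fun x => by simpa using θ01 _) with hh
  have hhx : ∀ x, h x = ((θ (‖g x‖ ^ 2) : ℝ) : ℂ) := fun x => rfl
  -- u = g * star g, with u x = ‖g x‖²
  set u : BoundedContinuousFunction X ℂ := g * star g with hu_def
  have hu : u ∈ F := mul_mem hg (star_mem hg)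
  have hux : ∀ x, u x = ((‖g x‖ ^ 2 : ℝ) : ℂ) := by
    intro x
    show g x * star (g x) = _
    rw [RCLike.star_def, RCLike.mul_conj]
    norm_cast
  have huxr : ∀ x, ‖g x‖ ^ 2 ∈ Set.Icc (0:ℝ) (‖g‖ ^ 2) := by
    intro x
    refine ⟨sq_nonneg _, ?_⟩
    exact pow_le_pow_left₀ (norm_nonneg _) (g.norm_coe_le_norm x) 2
  -- h ∈ F by Weierstrass approximation and closedness of F
  have hhF : h ∈ F := by
    show h ∈ (F : Set (BoundedContinuousFunction X ℂ))
    rw [← hF.closure_eq]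
    refine Metric.mem_closure_iff.2 fun ε hε => ?_
    obtain ⟨p, hp⟩ := exists_polynomial_near_of_continuousOn 0 (‖g‖ ^ 2) θ
      θcont.continuousOn (ε / 2) (by linarith)
    refine ⟨Polynomial.aeval u (p.map (algebraMap ℝ ℂ)), aeval_mem_F F hu _, ?_⟩
    rw [dist_eq_norm]
    have hb : ∀ x : X, (Polynomial.aeval u (p.map (algebraMap ℝ ℂ))) x
        = ((p.eval (‖g x‖ ^ 2) : ℝ) : ℂ) := by
      intro x
      have e1 : (Polynomial.aeval u (p.map (algebraMap ℝ ℂ))) x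
          = Polynomial.aeval (u x) (p.map (algebraMap ℝ ℂ)) :=
        (Polynomial.aeval_algHom_apply (evalHom x) u _).symm
      rw [e1, Polynomial.aeval_map_algebraMap, hux x]
      have : ((‖g x‖ ^ 2 : ℝ) : ℂ) = algebraMap ℝ ℂ (‖g x‖ ^ 2) := rfl
      rw [this, Polynomial.aeval_algebraMap_apply]
      simp
    have : ‖h - Polynomial.aeval u (p.map (algebraMap ℝ ℂ))‖ ≤ ε / 2 := by
      refine BoundedContinuousFunction.norm_le (by linarith) |>.2 fun x => ?_
      rw [BoundedContinuousFunction.sub_apply, hhx, hb]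
      rw [← Complex.ofReal_sub, Complex.norm_real, Real.norm_eq_abs]
      have := hp (‖g x‖ ^ 2) (huxr x)
      rw [abs_sub_comm] at this
      linarith
    linarith
  refine ⟨h, hhF, fun x hx => ?_, fun x hx => ?_⟩
  · rw [hhx, θ0]
    · simp
    · nlinarith [norm_nonneg (g x)]
  · rw [hhx, θ1]
    · simp
    · nlinarith [le_of_lt hs]

/-- Every `F`-filter extends to an `F`-ultrafilter. -/
private lemma exists_fultrafilter (F : StarSubalgebra ℂ (BoundedContinuousFunction X ℂ))
    {ψ : Set (Set X)} (hψ : FFilter F ψ) :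
    ∃ p : Set (Set X), FUltrafilter F p ∧ ψ ⊆ p := by
  set S : Set (Set (Set X)) := {χ | FFilter F χ ∧ ψ ⊆ χ} with hS
  have hub : ∀ c ⊆ S, IsChain (· ⊆ ·) c → c.Nonempty → ∃ ub ∈ S, ∀ s ∈ c, s ⊆ ub := by
    intro c hcS hchain ⟨χ₀, hχ₀⟩
    refine ⟨⋃₀ c, ⟨⟨⟨?_, ?_, ?_, ?_⟩, ?_, ?_, ?_⟩, ?_⟩, fun s hs => subset_sUnion_of_mem hs⟩
    · obtain ⟨B, hB⟩ := (hcS hχ₀).1.1.1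
      exact ⟨B, χ₀, hχ₀, hB⟩
    · rintro A ⟨χ₁, hχ₁, hA⟩ B ⟨χ₂, hχ₂, hB⟩
      rcases hchain.total hχ₁ hχ₂ with hle | hle
      · exact ⟨χ₂, hχ₂, (hcS hχ₂).1.1.2.1 A (hle hA) B hB⟩
      · exact ⟨χ₁, hχ₁, (hcS hχ₁).1.1.2.1 A hA B (hle hB)⟩
    · rintro A ⟨χ₁, hχ₁, hA⟩ B hAB
      exact ⟨χ₁, hχ₁, (hcS hχ₁).1.1.2.2.1 A hA B hAB⟩
    · rintro ⟨χ₁, hχ₁, hA⟩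
      exact (hcS hχ₁).1.1.2.2.2 hA
    · obtain ⟨B, hB⟩ := (hcS hχ₀).1.2.1
      exact ⟨B, χ₀, hχ₀, hB⟩
    · rintro A ⟨χ₁, hχ₁, hA⟩
      exact (hcS hχ₁).1.2.2.1 A hA
    · rintro A ⟨χ₁, hχ₁, hA⟩ hAne
      obtain ⟨B, hB, f, hf, h0, h1⟩ := (hcS hχ₁).1.2.2.2 A hA hAne
      exact ⟨B, ⟨χ₁, hχ₁, hB⟩, f, hf, h0, h1⟩
    · exact ((hcS hχ₀).2).trans (subset_sUnion_of_mem hχ₀)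
  obtain ⟨m, hψm, hm⟩ := zorn_subset_nonempty S hub ψ ⟨hψ, subset_rfl⟩
  refine ⟨m, ⟨hm.prop.1, fun χ hχ hmχ => ?_⟩, hψm⟩
  exact subset_antisymm (hm.le_of_ge ⟨hχ, hψm.trans hmχ⟩ hmχ) hmχ


end Aux

theorem stmt3 (F : StarSubalgebra ℂ (BoundedContinuousFunction X ℂ)) (hF : IsClosed (F : Set (BoundedContinuousFunction X ℂ)))
    (φ : Set (Set X)) (hφ : FFilter F φ) (A : Set X)
    (h : ∀ B ∈ φ, (A ∩ B).Nonempty) :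
    ∃ p : Set (Set X), FUltrafilter F p ∧ φ ⊆ p ∧
      ∀ f ∈ ZSet F A, ∀ r : ℝ, 0 < r → XSet f r ∈ p := by
  obtain ⟨⟨⟨B₀, hB₀⟩, hφinter, hφup, hφne⟩, hφfam⟩ := hφ
  have huniv : Set.univ ∈ φ := hφup B₀ hB₀ _ (subset_univ _)
  -- A is contained in every XSet g r for g ∈ Z(A), r ≥ 0
  have hAX : ∀ g ∈ ZSet F A, ∀ r : ℝ, 0 ≤ r → A ⊆ XSet g r := by
    intro g hg r hr x hx
    show ‖g x‖ ≤ r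
    rw [hg.2 x hx]; simpa using hr
  -- the candidate filter ψ
  set ψ : Set (Set X) :=
    {C | ∃ B ∈ φ, ∃ g ∈ ZSet F A, ∃ r : ℝ, 0 < r ∧ B ∩ XSet g r ⊆ C} with hψdef
  have hbase_ne : ∀ B ∈ φ, ∀ g ∈ ZSet F A, ∀ r : ℝ, 0 < r → (B ∩ XSet g r).Nonempty := by
    intro B hB g hg r hr
    obtain ⟨x, hxA, hxB⟩ := h B hB
    exact ⟨x, hxB, hAX g hg r hr.le hxA⟩
  have hψne : ∀ C ∈ ψ, C.Nonempty := by
    rintro C ⟨B, hB, g, hg, r, hr, hsub⟩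
    exact (hbase_ne B hB g hg r hr).mono hsub
  have hzero : (0 : BoundedContinuousFunction X ℂ) ∈ ZSet F A :=
    ⟨zero_mem F, fun x _ => rfl⟩
  have hφψ : φ ⊆ ψ := by
    intro B hB
    exact ⟨B, hB, 0, hzero, 1, one_pos, inter_subset_left⟩
  have hXψ : ∀ f ∈ ZSet F A, ∀ r : ℝ, 0 < r → XSet f r ∈ ψ := by
    intro f hf r hr
    exact ⟨Set.univ, huniv, f, hf, r, hr, inter_subset_right⟩
  -- ψ is a filter
  have hψfilter : IsSetFilter ψ := by
    refine ⟨⟨Set.univ, hφψ huniv⟩, ?_, ?_, ?_⟩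
    · rintro C₁ ⟨B₁, hB₁, g₁, hg₁, r₁, hr₁, hs₁⟩ C₂ ⟨B₂, hB₂, g₂, hg₂, r₂, hr₂, hs₂⟩
      refine ⟨B₁ ∩ B₂, hφinter _ hB₁ _ hB₂,
        g₁ * star g₁ + g₂ * star g₂,
        ⟨add_mem (mul_mem hg₁.1 (star_mem hg₁.1)) (mul_mem hg₂.1 (star_mem hg₂.1)),
          fun x hx => by simp [hg₁.2 x hx, hg₂.2 x hx]⟩,
        min (r₁ ^ 2) (r₂ ^ 2), lt_min (by positivity) (by positivity), ?_⟩
      rintro x ⟨⟨hxB₁, hxB₂⟩, hxX⟩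
      have hval : (g₁ * star g₁ + g₂ * star g₂) x
          = ((‖g₁ x‖ ^ 2 + ‖g₂ x‖ ^ 2 : ℝ) : ℂ) := by
        show g₁ x * star (g₁ x) + g₂ x * star (g₂ x) = _
        rw [RCLike.star_def, RCLike.mul_conj, RCLike.mul_conj]
        norm_cast
      have hnorm : ‖(g₁ * star g₁ + g₂ * star g₂) x‖ = ‖g₁ x‖ ^ 2 + ‖g₂ x‖ ^ 2 := by
        rw [hval, Complex.norm_real, Real.norm_eq_abs, abs_of_nonneg (by positivity)]
      have hxX' : ‖g₁ x‖ ^ 2 + ‖g₂ x‖ ^ 2 ≤ min (r₁ ^ 2) (r₂ ^ 2) := by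
        rw [← hnorm]; exact hxX
      have h1 : ‖g₁ x‖ ≤ r₁ := by
        have := le_trans hxX' (min_le_left _ _)
        nlinarith [norm_nonneg (g₁ x), sq_nonneg (‖g₂ x‖), hr₁.le]
      have h2 : ‖g₂ x‖ ≤ r₂ := by
        have := le_trans hxX' (min_le_right _ _)
        nlinarith [norm_nonneg (g₂ x), sq_nonneg (‖g₁ x‖), hr₂.le]
      exact ⟨hs₁ ⟨hxB₁, h1⟩, hs₂ ⟨hxB₂, h2⟩⟩
    · rintro C ⟨B, hB, g, hg, r, hr, hsub⟩ D hCD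
      exact ⟨B, hB, g, hg, r, hr, hsub.trans hCD⟩
    · intro hemp
      obtain ⟨x, hx⟩ := hψne ∅ hemp
      exact hx
  -- ψ is an F-family
  have hψfam : FFamily F ψ := by
    refine ⟨⟨Set.univ, hφψ huniv⟩, hψne, ?_⟩
    rintro C ⟨B, hB, g, hg, r, hr, hsub⟩ hCne
    obtain ⟨h₂, hh₂F, hh₂0, hh₂1⟩ :=
      exists_cutoff F hF hg.1 (half_pos hr) (half_lt_self hr)
    have hDψ : ∀ B' ∈ φ, B' ∩ XSet g (r / 2) ∈ ψ := fun B' hB' =>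
      ⟨B', hB', g, hg, r / 2, half_pos hr, subset_rfl⟩
    by_cases hBuniv : B = Set.univ
    · refine ⟨Set.univ ∩ XSet g (r / 2), hDψ _ huniv, h₂, hh₂F, ?_, ?_⟩
      · rintro x ⟨-, hx⟩
        exact hh₂0 x hx
      · intro x hx
        have hxr : ¬ (x ∈ B ∩ XSet g r) := fun hmem => hx (hsub hmem)
        rw [hBuniv] at hxr
        have : ¬ ‖g x‖ ≤ r := fun hle => hxr ⟨mem_univ x, hle⟩
        exact hh₂1 x (lt_of_not_ge this)
    · obtain ⟨B', hB', f₁, hf₁F, hf₁0, hf₁1⟩ := hφfam.2.2 B hB hBuniv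
      refine ⟨B' ∩ XSet g (r / 2), hDψ _ hB',
        f₁ + h₂ - f₁ * h₂, sub_mem (add_mem hf₁F hh₂F) (mul_mem hf₁F hh₂F), ?_, ?_⟩
      · rintro x ⟨hxB', hxX⟩
        have e1 : f₁ x = 0 := hf₁0 x hxB'
        have e2 : h₂ x = 0 := hh₂0 x hxX
        show f₁ x + h₂ x - f₁ x * h₂ x = 0
        rw [e1, e2]; ring
      · intro x hx
        have hxr : ¬ (x ∈ B ∩ XSet g r) := fun hmem => hx (hsub hmem)
        show f₁ x + h₂ x - f₁ x * h₂ x = 1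
        by_cases hxB : x ∈ B
        · have : ¬ ‖g x‖ ≤ r := fun hle => hxr ⟨hxB, hle⟩
          rw [hh₂1 x (lt_of_not_ge this)]; ring
        · rw [hf₁1 x hxB]; ring
  obtain ⟨p, hp, hψp⟩ := exists_fultrafilter F ⟨hψfilter, hψfam⟩
  exact ⟨p, hp, hφψ.trans hψp, fun f hf r hr => hψp (hXψ f hf r hr)⟩
end

section
/- For a collection φ of subsets of X, the following statements are equivalent: (i) φ is an F-ultrafilter on X; (ii) φ is an F-filter on X and, whenever X(f,r) ∉ φ for some f ∈ F and r > 0, then for every real t with 0 < t < r there exists A ∈ φ with X(f,t) ∩ A = ∅; (iii) φ is a maximal (with respect to inclusion) collection of subsets of X which is an F-family on X and has the finite intersection property; (iv) φ is an F-filter on X and, whenever A₁ ∪ ⋯ ∪ Aₙ ∈ φ for some n ∈ ℕ and subsets A₁,…,Aₙ of X, there exists k ∈ {1,…,n} such that X(f,r) ∈ φ for every f ∈ Z(Aₖ) and every r > 0; (v) φ is an F-filter on X and, for every non-empty subset A of X with A ≠ X, either X(f,r) ∈ φ for every f ∈ Z(A) and every r > 0, or X(g,r) ∈ φ for every g ∈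 Z(X∖A) and every r > 0. -/
open Set

variable {X : Type*} [Nonempty X] [TopologicalSpace X] [DiscreteTopology X]

section Helpers

open Polynomial BoundedContinuousFunction

variable {F : StarSubalgebra ℂ (BoundedContinuousFunction X ℂ)} {φ ψ : Set (Set X)}

/-- Evaluation at a point as an algebra hom on bounded continuous functions. -/
private noncomputable def evalAH (x : X) : BoundedContinuousFunction X ℂ →ₐ[ℂ] ℂ where
  toFun g := g x
  map_one' := rfl
  map_mul' _ _ := rfl
  map_zero' := rfl
  map_add' _ _ := rfl
  commutes' _ := rfl

/-- The key C*-algebra construction: a "bump" function separating the sublevel sets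
`X(f,s)` and `X(f,t)ᶜ`, obtained by polynomial approximation (Weierstrass). -/
private lemma keyG (hF : IsClosed (F : Set (BoundedContinuousFunction X ℂ)))
    {f : BoundedContinuousFunction X ℂ} (hf : f ∈ F) {s t : ℝ} (hs : 0 ≤ s) (hst : s < t) :
    ∃ g ∈ F, (∀ x, ‖f x‖ ≤ s → g x = 0) ∧ (∀ x, t < ‖f x‖ → g x = 1) := by
  have hden : (0:ℝ) < t ^ 2 - s ^ 2 := by
    have : s ^ 2 < t ^ 2 := by
      apply pow_lt_pow_left₀ hst hs
      norm_num
    linarith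
  set h : ℝ → ℝ := fun u => max 0 (min 1 ((u - s ^ 2) / (t ^ 2 - s ^ 2))) with hh
  have hh01 : ∀ u, |h u| ≤ 1 := by
    intro u
    rw [abs_le]
    constructor
    · exact le_trans (by norm_num) (le_max_left _ _)
    · exact max_le (by norm_num) (min_le_left _ _)
  have hcont : Continuous h := by
    apply continuous_const.max
    apply continuous_const.min
    exact (continuous_id.sub continuous_const).div_const _
  set g : BoundedContinuousFunction X ℂ :=
    BoundedContinuousFunction.ofNormedAddCommGroup (fun x => ((h (‖f x‖ ^ 2) : ℝ) : ℂ))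
      continuous_of_discreteTopology 1
      (fun x => by
        rw [Complex.norm_real]
        exact hh01 _) with hg
  have hgx : ∀ x : X, g x = ((h (‖f x‖ ^ 2) : ℝ) : ℂ) := fun x => rfl
  have hzero : ∀ x, ‖f x‖ ≤ s → g x = 0 := by
    intro x hx
    have h1 : ‖f x‖ ^ 2 ≤ s ^ 2 := by
      apply pow_le_pow_left₀ (norm_nonneg _) hx
    have : h (‖f x‖ ^ 2) = 0 := by
      rw [hh]
      simp only
      rw [max_eq_left]
      refine le_trans (min_le_right _ _) ?_
      apply div_nonpos_of_nonpos_of_nonneg <;> linarith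
    rw [hgx, this, Complex.ofReal_zero]
  have hone : ∀ x, t < ‖f x‖ → g x = 1 := by
    intro x hx
    have h1 : t ^ 2 ≤ ‖f x‖ ^ 2 := by
      apply pow_le_pow_left₀ (le_of_lt (lt_of_le_of_lt hs hst)) (le_of_lt hx)
    have h2 : (1:ℝ) ≤ (‖f x‖ ^ 2 - s ^ 2) / (t ^ 2 - s ^ 2) := by
      rw [le_div_iff₀ hden]
      linarith
    have : h (‖f x‖ ^ 2) = 1 := by
      rw [hh]
      simp only
      rw [min_eq_left h2, max_eq_right (by norm_num)]
    rw [hgx, this, Complex.ofReal_one]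
  refine ⟨g, ?_, hzero, hone⟩
  have : g ∈ closure (F : Set (BoundedContinuousFunction X ℂ)) := by
    rw [Metric.mem_closure_iff]
    intro ε hε
    set a : BoundedContinuousFunction X ℂ := star f * f with ha
    have haF : a ∈ F := mul_mem (star_mem hf) hf
    have hax : ∀ x : X, a x = ((‖f x‖ ^ 2 : ℝ) : ℂ) := by
      intro x
      have : a x = star (f x) * f x := rfl
      rw [this, Complex.star_def, mul_comm, Complex.mul_conj, Complex.normSq_eq_norm_sq]
    set M : ℝ := ‖f‖ ^ 2 with hM
    have hmem : ∀ x : X, ‖f x‖ ^ 2 ∈ Icc (0:ℝ) M := by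
      intro x
      exact ⟨by positivity, pow_le_pow_left₀ (norm_nonneg _) (f.norm_coe_le_norm x) 2⟩
    obtain ⟨p, hp⟩ := exists_polynomial_near_of_continuousOn 0 M h hcont.continuousOn (ε/2)
      (by linarith)
    set b : BoundedContinuousFunction X ℂ := aeval a (p.map (algebraMap ℝ ℂ)) with hb
    have hbF : b ∈ F := by
      have : Algebra.adjoin ℂ ({a} : Set (BoundedContinuousFunction X ℂ)) ≤ F.toSubalgebra :=
        Algebra.adjoin_le (by simpa using haF)
      exact this (aeval_mem_adjoin_singleton ℂ a)
    refine ⟨b, hbF, ?_⟩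
    have hd : dist g b ≤ ε / 2 := by
      rw [BoundedContinuousFunction.dist_le (by linarith)]
      intro x
      have hbx : b x = ((p.eval (‖f x‖ ^ 2) : ℝ) : ℂ) := by
        have e1 : b x = evalAH x b := rfl
        rw [e1, hb, ← aeval_algHom_apply (evalAH x) a (p.map (algebraMap ℝ ℂ))]
        have e2 : evalAH x a = ((‖f x‖ ^ 2 : ℝ) : ℂ) := hax x
        rw [e2, aeval_map_algebraMap]
        have : ((‖f x‖ ^ 2 : ℝ) : ℂ) = algebraMap ℝ ℂ (‖f x‖ ^ 2) := rfl
        rw [this, aeval_algebraMap_apply_eq_algebraMap_eval]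
        rfl
      rw [dist_eq_norm, hgx, hbx, ← Complex.ofReal_sub, Complex.norm_real, Real.norm_eq_abs]
      have := hp _ (hmem x)
      rw [abs_sub_comm] at this
      linarith
    linarith [hd]
  rwa [hF.closure_eq] at this

private lemma mem_XSet {f : BoundedContinuousFunction X ℂ} {u : ℝ} {x : X} :
    x ∈ XSet f u ↔ ‖f x‖ ≤ u := Iff.rfl

private lemma XSet_mono (f : BoundedContinuousFunction X ℂ) {u v : ℝ} (h : u ≤ v) :
    XSet f u ⊆ XSet f v := fun x hx => le_trans hx h

private lemma univ_mem (h : IsSetFilter φ) : (Set.univ : Set X) ∈ φ := by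
  obtain ⟨A, hA⟩ := h.1
  exact h.2.2.1 A hA Set.univ (Set.subset_univ A)

private lemma sInter_mem (h : IsSetFilter φ) : ∀ {s : Finset (Set X)}, s.Nonempty →
    ↑s ⊆ φ → ⋂₀ (s : Set (Set X)) ∈ φ := by
  intro s hne
  induction hne using Finset.Nonempty.cons_induction with
  | singleton A =>
    intro hs
    simpa using hs (by simp)
  | cons A s hAs hsne IH =>
    intro hs
    have h1 : A ∈ φ := hs (by simp)
    have h2 := IH (fun S hS => hs (by simp [hS]))
    rw [Finset.coe_cons, Set.sInter_insert]
    exact h.2.1 A h1 _ h2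

private lemma fip_of (h : FFilter F φ) : FIP φ := fun s hs hne =>
  h.2.2.1 _ (sInter_mem h.1 hne hs)

private lemma pairFor (h : FFamily F φ) {A : Set X} (hA : A ∈ φ) :
    ∃ B ∈ φ, ∃ g ∈ F, (∀ x ∈ B, g x = 0) ∧ ∀ x ∉ A, g x = 1 := by
  by_cases hu : A = Set.univ
  · refine ⟨A, hA, 0, zero_mem F, fun x _ => rfl, fun x hx => absurd (hu ▸ Set.mem_univ x) hx⟩
  · exact h.2.2 A hA hu

private lemma comb_apply (g₁ g₂ : BoundedContinuousFunction X ℂ) (x : X) :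
    (g₁ + g₂ - g₁ * g₂) x = g₁ x + g₂ x - g₁ x * g₂ x := rfl

private lemma comb_zero {g₁ g₂ : BoundedContinuousFunction X ℂ} {x : X}
    (h1 : g₁ x = 0) (h2 : g₂ x = 0) : (g₁ + g₂ - g₁ * g₂) x = 0 := by
  rw [comb_apply, h1, h2]; ring

private lemma comb_one {g₁ g₂ : BoundedContinuousFunction X ℂ} {x : X}
    (h : g₁ x = 1 ∨ g₂ x = 1) : (g₁ + g₂ - g₁ * g₂) x = 1 := by
  rcases h with h | h <;> rw [comb_apply, h] <;> ring

private lemma comb_mem {g₁ g₂ : BoundedContinuousFunction X ℂ} (h1 : g₁ ∈ F) (h2 : g₂ ∈ F) :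
    g₁ + g₂ - g₁ * g₂ ∈ F := sub_mem (add_mem h1 h2) (mul_mem h1 h2)

private lemma refine_finset (H : ∀ C ∈ ψ, ∃ t : Finset (Set X), ↑t ⊆ φ ∧ t.Nonempty ∧
    ⋂₀ (t : Set (Set X)) ⊆ C) :
    ∀ s : Finset (Set X), s.Nonempty → ↑s ⊆ ψ →
      ∃ t : Finset (Set X), ↑t ⊆ φ ∧ t.Nonempty ∧ ⋂₀ (t : Set (Set X)) ⊆ ⋂₀ (s : Set (Set X)) := by
  classical
  intro s hne
  induction hne using Finset.Nonempty.cons_induction with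
  | singleton C =>
    intro hs
    obtain ⟨t, h1, h2, h3⟩ := H C (hs (by simp))
    exact ⟨t, h1, h2, by simpa using h3⟩
  | cons C s hCs hsne IH =>
    intro hs
    obtain ⟨t1, h11, h12, h13⟩ := H C (hs (by simp))
    obtain ⟨t2, h21, h22, h23⟩ := IH (fun S hS => hs (by simp [hS]))
    refine ⟨t1 ∪ t2, ?_, ?_, ?_⟩
    · rw [Finset.coe_union]
      exact Set.union_subset h11 h21
    · exact h12.mono Finset.subset_union_left
    · rw [Finset.coe_union, Set.sInter_union, Finset.coe_cons, Set.sInter_insert]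
      exact Set.inter_subset_inter h13 h23

private lemma iInter_mem_filter (h : IsSetFilter φ) :
    ∀ {n : ℕ} (A : Fin n → Set X), (∀ k, A k ∈ φ) → (⋂ k, A k) ∈ φ := by
  intro n
  induction n with
  | zero =>
    intro A _
    have : (⋂ k, A k) = Set.univ := by simp
    rw [this]; exact univ_mem h
  | succ n IH =>
    intro A hA
    have : (⋂ k, A k) = A 0 ∩ ⋂ k : Fin n, A k.succ := by
      ext x
      simp [Fin.forall_fin_succ]
    rw [this]
    exact h.2.1 _ (hA 0) _ (IH _ fun k => hA _)

end Helpers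


theorem stmt4 (F : StarSubalgebra ℂ (BoundedContinuousFunction X ℂ)) (hF : IsClosed (F : Set (BoundedContinuousFunction X ℂ))) (φ : Set (Set X)) :
    List.TFAE
      [FUltrafilter F φ,
       FFilter F φ ∧ ∀ f ∈ F, ∀ r : ℝ, 0 < r → XSet f r ∉ φ →
         ∀ t : ℝ, 0 < t → t < r → ∃ A ∈ φ, XSet f t ∩ A = ∅,
       (FFamily F φ ∧ FIP φ) ∧
         ∀ ψ : Set (Set X), FFamily F ψ → FIP ψ → φ ⊆ ψ → ψ = φ,
       FFilter F φ ∧ ∀ n : ℕ, ∀ A : Fin (n + 1) → Set X, (⋃ k, A k) ∈ φ →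
         ∃ k, ∀ f ∈ ZSet F (A k), ∀ r : ℝ, 0 < r → XSet f r ∈ φ,
       FFilter F φ ∧ ∀ A : Set X, A.Nonempty → A ≠ Set.univ →
         (∀ f ∈ ZSet F A, ∀ r : ℝ, 0 < r → XSet f r ∈ φ) ∨
         (∀ g ∈ ZSet F Aᶜ, ∀ r : ℝ, 0 < r → XSet g r ∈ φ)] := by
  classical
  tfae_have 1 → 2 := by
    rintro ⟨hφ, hmax⟩
    refine ⟨hφ, ?_⟩
    intro f hf r hr hXr t ht htr
    by_contra hc
    push_neg at hc
    have hne : ∀ A ∈ φ, (XSet f t ∩ A).Nonempty := hc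
    set ψ : Set (Set X) := {C | ∃ A ∈ φ, ∃ u : ℝ, t < u ∧ XSet f u ∩ A ⊆ C} with hψdef
    have hφψ : φ ⊆ ψ :=
      fun A hA => ⟨A, hA, t + 1, by linarith, Set.inter_subset_right⟩
    have hneC : ∀ C ∈ ψ, C.Nonempty := by
      rintro C ⟨A, hA, u, hu, hsub⟩
      exact (hne A hA).mono
        ((Set.inter_subset_inter_left _ (XSet_mono f hu.le)).trans hsub)
    have hfil : IsSetFilter ψ := by
      refine ⟨⟨Set.univ, hφψ (univ_mem hφ.1)⟩, ?_, ?_, ?_⟩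
      · rintro C₁ ⟨A₁, hA₁, u₁, hu₁, hs₁⟩ C₂ ⟨A₂, hA₂, u₂, hu₂, hs₂⟩
        refine ⟨A₁ ∩ A₂, hφ.1.2.1 _ hA₁ _ hA₂, min u₁ u₂, lt_min hu₁ hu₂, ?_⟩
        rintro x ⟨hxX, hxA⟩
        have hxX' : ‖f x‖ ≤ min u₁ u₂ := mem_XSet.mp hxX
        exact ⟨hs₁ ⟨mem_XSet.mpr (le_trans hxX' (min_le_left _ _)), hxA.1⟩,
          hs₂ ⟨mem_XSet.mpr (le_trans hxX' (min_le_right _ _)), hxA.2⟩⟩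
      · rintro C ⟨A, hA, u, hu, hsX⟩ D hCD
        exact ⟨A, hA, u, hu, hsX.trans hCD⟩
      · intro hemp
        exact Set.not_nonempty_empty (hneC ∅ hemp)
    have hfam : FFamily F ψ := by
      refine ⟨⟨Set.univ, hφψ (univ_mem hφ.1)⟩, hneC, ?_⟩
      rintro C hC hCu
      obtain ⟨A, hA, u, hu, hsub⟩ := hC
      have htu : (0:ℝ) ≤ (t + u) / 2 := by linarith
      have htu2 : (t + u) / 2 < u := by linarith
      obtain ⟨g₁, hg₁F, hz1, ho1⟩ := keyG hF hf htu htu2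
      obtain ⟨BA, hBA, gA, hgAF, hzA, hoA⟩ := pairFor hφ.2 hA
      refine ⟨XSet f ((t + u) / 2) ∩ BA, ⟨BA, hBA, (t + u) / 2, by linarith, subset_rfl⟩,
        gA + g₁ - gA * g₁, comb_mem hgAF hg₁F, ?_, ?_⟩
      · rintro x ⟨hx1, hx2⟩
        exact comb_zero (hzA x hx2) (hz1 x (mem_XSet.mp hx1))
      · intro x hxC
        have hxn : x ∉ XSet f u ∩ A := fun hx => hxC (hsub hx)
        by_cases hxA : x ∈ A
        · refine comb_one (Or.inr (ho1 x ?_))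
          by_contra hle
          push_neg at hle
          exact hxn ⟨mem_XSet.mpr hle, hxA⟩
        · exact comb_one (Or.inl (hoA x hxA))
    have heq := hmax ψ ⟨hfil, hfam⟩ hφψ
    have hXr' : XSet f r ∈ ψ :=
      ⟨Set.univ, univ_mem hφ.1, r, htr, Set.inter_subset_left⟩
    rw [heq] at hXr'
    exact hXr hXr'
  tfae_have 2 → 3 := by
    rintro ⟨hφ, h2⟩
    refine ⟨⟨hφ.2, fip_of hφ⟩, ?_⟩
    intro ψ hfam hfip hsub
    refine Set.Subset.antisymm ?_ hsub
    intro C hC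
    by_cases hCu : C = Set.univ
    · subst hCu; exact univ_mem hφ.1
    obtain ⟨B, hB, f, hfF, hz, ho⟩ := hfam.2.2 C hC hCu
    have hX23 : XSet f (2/3) ∈ φ := by
      by_contra hX
      obtain ⟨A, hA, hAe⟩ := h2 f hfF (2/3) (by norm_num) hX (1/2) (by norm_num) (by norm_num)
      have hBsub : B ⊆ XSet f (1/2) := by
        intro x hx
        rw [mem_XSet, hz x hx]
        norm_num
      have hne : (⋂₀ (({B, A} : Finset (Set X)) : Set (Set X))).Nonempty := by
        apply hfip
        · intro S hS
          simp only [Finset.coe_insert, Finset.coe_singleton, Set.mem_insert_iff,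
            Set.mem_singleton_iff] at hS
          rcases hS with rfl | rfl
          · exact hB
          · exact hsub hA
        · exact ⟨B, by simp⟩
      rw [Finset.coe_insert, Finset.coe_singleton, Set.sInter_insert,
        Set.sInter_singleton] at hne
      have : B ∩ A ⊆ XSet f (1/2) ∩ A := Set.inter_subset_inter_left _ hBsub
      rw [hAe] at this
      exact Set.not_nonempty_empty (hne.mono this)
    have hsubC : XSet f (2/3) ⊆ C := by
      intro x hx
      by_contra hxC
      have h1 := ho x hxC
      have : ‖f x‖ ≤ 2/3 := hx
      rw [h1] at this
      norm_num at this
    exact hφ.1.2.2.1 _ hX23 C hsubC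
  tfae_have 3 → 1 := by
    rintro ⟨⟨hfam, hfip⟩, hmax⟩
    have hpair : ∀ D ∈ φ, ∀ E ∈ φ, (D ∩ E : Set X).Nonempty := by
      intro D hD E hE
      have hne : (⋂₀ (({D, E} : Finset (Set X)) : Set (Set X))).Nonempty := by
        apply hfip
        · intro S hS
          simp only [Finset.coe_insert, Finset.coe_singleton, Set.mem_insert_iff,
            Set.mem_singleton_iff] at hS
          rcases hS with rfl | rfl
          · exact hD
          · exact hE
        · exact ⟨D, by simp⟩
      rwa [Finset.coe_insert, Finset.coe_singleton, Set.sInter_insert,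
        Set.sInter_singleton] at hne
    set ψ : Set (Set X) := {C | ∃ D ∈ φ, ∃ E ∈ φ, D ∩ E ⊆ C} with hψdef
    have hφψ : φ ⊆ ψ := fun A hA => ⟨A, hA, A, hA, by simp⟩
    have hmemne : ∀ C ∈ ψ, C.Nonempty := by
      rintro C ⟨D, hD, E, hE, hsub⟩
      exact (hpair D hD E hE).mono hsub
    have hfamψ : FFamily F ψ := by
      obtain ⟨A₀, hA₀⟩ := hfam.1
      refine ⟨⟨A₀, hφψ hA₀⟩, hmemne, ?_⟩
      rintro C ⟨D, hD, E, hE, hsub⟩ hCu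
      obtain ⟨BD, hBD, gD, hgDF, hzD, hoD⟩ := pairFor hfam hD
      obtain ⟨BE, hBE, gE, hgEF, hzE, hoE⟩ := pairFor hfam hE
      refine ⟨BD ∩ BE, ⟨BD, hBD, BE, hBE, subset_rfl⟩, gD + gE - gD * gE,
        comb_mem hgDF hgEF, ?_, ?_⟩
      · rintro x ⟨hx1, hx2⟩
        exact comb_zero (hzD x hx1) (hzE x hx2)
      · intro x hxC
        have hxn : x ∉ D ∩ E := fun hx => hxC (hsub hx)
        by_cases hxD : x ∈ D
        · exact comb_one (Or.inr (hoE x (fun hxE => hxn ⟨hxD, hxE⟩)))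
        · exact comb_one (Or.inl (hoD x hxD))
    have hfipψ : FIP ψ := by
      intro s hs hne
      obtain ⟨tset, h1, h2, h3⟩ := refine_finset
        (fun C hC => by
          obtain ⟨D, hD, E, hE, hsub⟩ := hC
          refine ⟨{D, E}, ?_, ⟨D, by simp⟩, ?_⟩
          · intro S hS
            simp only [Finset.coe_insert, Finset.coe_singleton, Set.mem_insert_iff,
              Set.mem_singleton_iff] at hS
            rcases hS with rfl | rfl
            · exact hD
            · exact hE
          · rw [Finset.coe_insert, Finset.coe_singleton, Set.sInter_insert,
              Set.sInter_singleton]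
            exact hsub)
        s hne hs
      exact (hfip tset h1 h2).mono h3
    have heq := hmax ψ hfamψ hfipψ hφψ
    have hfil : IsSetFilter φ := by
      refine ⟨hfam.1, ?_, ?_, ?_⟩
      · intro A hA B hB
        rw [← heq]
        exact ⟨A, hA, B, hB, subset_rfl⟩
      · intro A hA B hAB
        rw [← heq]
        exact ⟨A, hA, A, hA, by simpa using hAB⟩
      · intro hemp
        exact Set.not_nonempty_empty (hfam.2.1 ∅ hemp)
    refine ⟨⟨hfil, hfam⟩, ?_⟩
    intro ψ' hψ' hsub
    exact hmax ψ' hψ'.2 (fip_of hψ') hsub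
  tfae_have 2 → 4 := by
    rintro ⟨hφ, h2⟩
    refine ⟨hφ, ?_⟩
    intro n A hU
    by_contra hc
    push_neg at hc
    choose f hfZ r hr hX using hc
    choose A' hA' hdisj using fun k => h2 (f k) (hfZ k).1 (r k) (hr k) (hX k) (r k / 2)
      (half_pos (hr k)) (half_lt_self (hr k))
    have hInt : (⋂ k, A' k) ∈ φ := iInter_mem_filter hφ.1 A' hA'
    have hmem : ((⋃ k, A k) ∩ ⋂ k, A' k) ∈ φ := hφ.1.2.1 _ hU _ hInt
    obtain ⟨x, hx1, hx2⟩ := hφ.2.2.1 _ hmem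
    obtain ⟨k, hxk⟩ := Set.mem_iUnion.mp hx1
    have hxX : x ∈ XSet (f k) (r k / 2) := by
      rw [mem_XSet]
      rw [(hfZ k).2 x hxk]
      simpa using (half_pos (hr k)).le
    have hmem2 : x ∈ XSet (f k) (r k / 2) ∩ A' k := ⟨hxX, Set.mem_iInter.mp hx2 k⟩
    rw [hdisj k] at hmem2
    exact hmem2
  tfae_have 4 → 5 := by
    rintro ⟨hφ, h4⟩
    refine ⟨hφ, ?_⟩
    intro A hAne hAu
    have hU : (⋃ k, (![A, Aᶜ] : Fin 2 → Set X) k) ∈ φ := by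
      have : (⋃ k, (![A, Aᶜ] : Fin 2 → Set X) k) = Set.univ := by
        apply Set.eq_univ_of_forall
        intro x
        by_cases hx : x ∈ A
        · exact Set.mem_iUnion.2 ⟨0, hx⟩
        · exact Set.mem_iUnion.2 ⟨1, hx⟩
      rw [this]
      exact univ_mem hφ.1
    obtain ⟨k, hk⟩ := h4 1 ![A, Aᶜ] hU
    fin_cases k
    · left; simpa using hk
    · right; simpa using hk
  tfae_have 5 → 1 := by
    rintro ⟨hφ, h5⟩
    refine ⟨hφ, ?_⟩
    intro ψ hψ hsub
    refine Set.Subset.antisymm ?_ hsub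
    intro C hC
    by_cases hCu : C = Set.univ
    · subst hCu; exact univ_mem hφ.1
    obtain ⟨B, hB, f, hfF, hz, ho⟩ := hψ.2.2.2 C hC hCu
    by_cases hBu : B = Set.univ
    · exfalso
      apply hCu
      apply Set.eq_univ_of_forall
      intro x
      by_contra hx
      have h1 := ho x hx
      have h0 := hz x (hBu ▸ Set.mem_univ x)
      rw [h0] at h1
      exact one_ne_zero h1.symm
    have hBne : B.Nonempty := hψ.2.2.1 B hB
    rcases h5 B hBne hBu with hcase | hcase
    · have hX : XSet f (1/2) ∈ φ := hcase f ⟨hfF, hz⟩ (1/2) (by norm_num)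
      have hsubC : XSet f (1/2) ⊆ C := by
        intro x hx
        by_contra hxC
        have h1 := ho x hxC
        have : ‖f x‖ ≤ 1/2 := mem_XSet.mp hx
        rw [h1] at this
        norm_num at this
      exact hφ.1.2.2.1 _ hX C hsubC
    · exfalso
      obtain ⟨B', hB', h', hh'F, hz', ho'⟩ := hψ.2.2.2 B hB hBu
      have hg : (1 - h') ∈ ZSet F Bᶜ := by
        refine ⟨sub_mem (one_mem F) hh'F, ?_⟩
        intro x hx
        have : (1 - h') x = 1 - h' x := rfl
        rw [this, ho' x hx, sub_self]
      have hX : XSet (1 - h') (1/2) ∈ φ := hcase _ hg (1/2) (by norm_num)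
      have hint : XSet (1 - h') (1/2) ∩ B' ∈ ψ := hψ.1.2.1 _ (hsub hX) _ hB'
      have hemp : XSet (1 - h') (1/2) ∩ B' = ∅ := by
        ext x
        simp only [Set.mem_inter_iff, Set.mem_empty_iff_false, iff_false, not_and]
        intro h1 h2
        have he : (1 - h') x = 1 - h' x := rfl
        have : ‖(1 - h') x‖ ≤ 1/2 := mem_XSet.mp h1
        rw [he, hz' x h2, sub_zero] at this
        norm_num at this
      rw [hemp] at hint
      exact hψ.1.2.2.2 hint
  tfae_finish
end

section
/- For subsets A and B of X: (i) the set {p ∈ δX : X∖A ∈ p} equals δX minus the closure of e(A) in δX; (ii) if A is τ(F)-open, then the closure of e(A) in δX equals the closure of Â in δX; (iii) Â = B̂ if and only if A° = B°; (iv) Â = ∅ if and only if A° = ∅; (v) Â = δX if and only if A = X. -/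
open Set

variable {X : Type*} [Nonempty X] [TopologicalSpace X] [DiscreteTopology X]

section Generic
variable {α : Type*} (t : TopologicalSpace α)

lemma my_interior_subset (s : Set α) : @interior α t s ⊆ s := by
  letI := t; exact interior_subset

lemma my_interior_univ : @interior α t Set.univ = Set.univ := by
  letI := t; exact interior_univ

lemma my_interior_mono {s u : Set α} (h : s ⊆ u) :
    @interior α t s ⊆ @interior α t u := by
  letI := t; exact interior_mono h

lemma my_interior_maximal {s u : Set α} (h : s ⊆ u) (hs : @IsOpen α t s) :
    s ⊆ @interior α t u := by
  letI := t; exact interior_maximal h hs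

lemma my_isOpen_interior_eq {s : Set α} (hs : @IsOpen α t s) :
    @interior α t s = s := by
  letI := t; exact hs.interior_eq

lemma my_mem_interior_iff_mem_nhds {s : Set α} {x : α} :
    x ∈ @interior α t s ↔ s ∈ @nhds α t x := by
  letI := t; exact mem_interior_iff_mem_nhds

lemma my_open_norm_lt (f : α → ℂ) (h : @Continuous α ℂ t _ f) (r : ℝ) :
    @IsOpen α t {x | ‖f x‖ < r} := by
  letI := t; exact isOpen_lt h.norm continuous_const

end Generic

section Aux

variable {F : StarSubalgebra ℂ (BoundedContinuousFunction X ℂ)}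

lemma Delta.univ_mem (p : Delta F) : Set.univ ∈ p.1 := by
  obtain ⟨C, hC⟩ := p.2.1.1.1
  exact p.2.1.1.2.2.1 C hC _ (Set.subset_univ C)

lemma Delta.nonempty_of_mem (p : Delta F) {U : Set X} (hU : U ∈ p.1) : U.Nonempty :=
  p.2.1.2.2.1 U hU

lemma Delta.inter_mem (p : Delta F) {U V : Set X} (hU : U ∈ p.1) (hV : V ∈ p.1) :
    U ∩ V ∈ p.1 :=
  p.2.1.1.2.1 U hU V hV

lemma Delta.up_mem (p : Delta F) {U V : Set X} (hU : U ∈ p.1) (h : U ⊆ V) : V ∈ p.1 :=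
  p.2.1.1.2.2.1 U hU V h

lemma cont_of_memF {f : BoundedContinuousFunction X ℂ} (hf : f ∈ F) :
    @Continuous X ℂ (tauF F) _ (fun x => f x) :=
  continuous_iff_le_induced.mpr (iInf₂_le f hf)

lemma Delta.interior_mem (p : Delta F) {U : Set X} (hU : U ∈ p.1) :
    @interior X (tauF F) U ∈ p.1 := by
  rcases eq_or_ne U Set.univ with rfl | hne
  · rwa [my_interior_univ (tauF F)]
  · obtain ⟨Bp, hBp, f, hfF, hf0, hf1⟩ := p.2.1.2.2.2 U hU hne
    have hVopen : @IsOpen X (tauF F) {x : X | ‖f x‖ < 1/2} :=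
      my_open_norm_lt (tauF F) _ (cont_of_memF hfF) _
    have hVU : {x : X | ‖f x‖ < 1/2} ⊆ U := by
      intro x hx
      by_contra hxU
      rw [Set.mem_setOf_eq, hf1 x hxU] at hx
      norm_num at hx
    have hBV : Bp ⊆ {x : X | ‖f x‖ < 1/2} := by
      intro x hx
      rw [Set.mem_setOf_eq, hf0 x hx]
      norm_num
    exact p.up_mem hBp (hBV.trans (my_interior_maximal (tauF F) hVU hVopen))

lemma basis_hat (F : StarSubalgebra ℂ (BoundedContinuousFunction X ℂ)) :
    TopologicalSpace.IsTopologicalBasis {S : Set (Delta F) | ∃ A : Set X, S = hatSet F A} := by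
  refine ⟨?_, ?_, rfl⟩
  · rintro t₁ ⟨A, rfl⟩ t₂ ⟨B, rfl⟩ p ⟨hA, hB⟩
    exact ⟨hatSet F (A ∩ B), ⟨A ∩ B, rfl⟩, p.inter_mem hA hB,
      fun q hq => ⟨q.up_mem hq Set.inter_subset_left, q.up_mem hq Set.inter_subset_right⟩⟩
  · apply Set.eq_univ_of_forall
    intro p
    exact ⟨hatSet F Set.univ, ⟨Set.univ, rfl⟩, p.univ_mem⟩

lemma mem_hat_e {e : X → Delta F}
    (he : ∀ x : X, (e x).1 = {A : Set X | A ∈ @nhds X (tauF F) x}) (x : X) (U : Set X) :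
    e x ∈ hatSet F U ↔ x ∈ @interior X (tauF F) U := by
  have h1 : e x ∈ hatSet F U ↔ U ∈ @nhds X (tauF F) x := by
    constructor
    · intro h
      have h' : U ∈ (e x).1 := h
      rw [he x] at h'
      exact h'
    · intro h
      show U ∈ (e x).1
      rw [he x]
      exact h
  rw [h1, ← my_mem_interior_iff_mem_nhds (tauF F)]

lemma mem_closure_e {e : X → Delta F}
    (he : ∀ x : X, (e x).1 = {A : Set X | A ∈ @nhds X (tauF F) x}) (A : Set X) (p : Delta F) :
    p ∈ closure (e '' A) ↔ ∀ U ∈ p.1, (A ∩ @interior X (tauF F) U).Nonempty := by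
  rw [(basis_hat F).mem_closure_iff]
  constructor
  · intro h U hU
    obtain ⟨q, hq1, x, hxA, rfl⟩ := h (hatSet F U) ⟨U, rfl⟩ hU
    exact ⟨x, hxA, (mem_hat_e he x U).1 hq1⟩
  · rintro h o ⟨U, rfl⟩ hpo
    obtain ⟨x, hxA, hxint⟩ := h U hpo
    exact ⟨e x, (mem_hat_e he x U).2 hxint, ⟨x, hxA, rfl⟩⟩

end Aux

theorem stmt8 (F : StarSubalgebra ℂ (BoundedContinuousFunction X ℂ)) (hF : IsClosed (F : Set (BoundedContinuousFunction X ℂ))) (e : X → Delta F) (he : ∀ x : X, (e x).1 = {A : Set X | A ∈ @nhds X (tauF F) x}) (A B : Set X) :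
    hatSet F Aᶜ = (closure (e '' A))ᶜ ∧
    (@IsOpen X (tauF F) A → closure (e '' A) = closure (hatSet F A)) ∧
    (hatSet F A = hatSet F B ↔ @interior X (tauF F) A = @interior X (tauF F) B) ∧
    (hatSet F A = ∅ ↔ @interior X (tauF F) A = ∅) ∧
    (hatSet F A = Set.univ ↔ A = Set.univ) := by
  have hat_int : ∀ C : Set X, hatSet F C = hatSet F (@interior X (tauF F) C) := by
    intro C
    ext p
    constructor
    · intro hp
      exact p.interior_mem hp
    · intro hp
      exact p.up_mem hp (my_interior_subset (tauF F) _)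
  have hat_sub_cl : ∀ C : Set X, hatSet F C ⊆ closure (e '' C) := by
    intro C p hp
    rw [mem_closure_e he]
    intro U hU
    have h1 : @interior X (tauF F) (C ∩ U) ∈ p.1 := p.interior_mem (p.inter_mem hp hU)
    have h2 : @interior X (tauF F) (C ∩ U) ⊆ C ∩ @interior X (tauF F) U := by
      intro x hx
      exact ⟨(my_interior_subset (tauF F) _ hx).1, my_interior_mono (tauF F) Set.inter_subset_right hx⟩
    exact (p.nonempty_of_mem h1).mono h2
  refine ⟨?_, ?_, ?_, ?_, ?_⟩
  · ext p
    rw [Set.mem_compl_iff, mem_closure_e he]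
    constructor
    · intro hp h
      obtain ⟨x, hxA, hxint⟩ := h Aᶜ hp
      exact (my_interior_subset (tauF F) _ hxint) hxA
    · intro h
      push_neg at h
      obtain ⟨U, hU, hUe⟩ := h
      have hsub : @interior X (tauF F) U ⊆ Aᶜ := by
        intro x hx hxA
        exact Set.eq_empty_iff_forall_notMem.mp hUe x ⟨hxA, hx⟩
      exact p.up_mem (p.interior_mem hU) hsub
  · intro hA
    apply Set.Subset.antisymm
    · apply closure_mono
      intro q ⟨x, hxA, hq⟩
      subst hq
      exact (mem_hat_e he x A).2 (by rwa [my_isOpen_interior_eq (tauF F) hA])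
    · exact closure_minimal (hat_sub_cl A) isClosed_closure
  · constructor
    · intro h
      apply Set.Subset.antisymm
      · intro x hx
        have : e x ∈ hatSet F B := h ▸ (mem_hat_e he x A).2 hx
        exact (mem_hat_e he x B).1 this
      · intro x hx
        have : e x ∈ hatSet F A := h ▸ (mem_hat_e he x B).2 hx
        exact (mem_hat_e he x A).1 this
    · intro h
      rw [hat_int A, hat_int B, h]
  · constructor
    · intro h
      rw [Set.eq_empty_iff_forall_notMem]
      intro x hx
      have : e x ∈ hatSet F A := (mem_hat_e he x A).2 hx
      rw [h] at this
      exact this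
    · intro h
      rw [hat_int A, h, Set.eq_empty_iff_forall_notMem]
      intro p hp
      exact p.2.1.1.2.2.2 hp
  · constructor
    · intro h
      rw [Set.eq_univ_iff_forall]
      intro x
      have : e x ∈ hatSet F A := h ▸ Set.mem_univ _
      exact my_interior_subset (tauF F) _ ((mem_hat_e he x A).1 this)
    · rintro rfl
      exact Set.eq_univ_of_forall fun p => p.univ_mem
end
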